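/- Let s, n ∈ ℕ and suppose F₁, …, F_s ⊆ P([n]) are s-wise cross intersecting, i.e., for all A₁ ∈ F₁, …, A_s ∈ F_s, A₁ ∩ ⋯ ∩ A_s ≠ ∅. Then (1/s)·Σ_{i=1}^s μ_{(s−1)/s}(F_i) ≤ (s−1)/s. -/

import Mathlib

open Finset

/-- The `p`-biased measure of a family of subsets of `Fin n`. -/
def biasedMu (n : ℕ) (p : ℝ) (F : Finset (Finset (Fin n))) : ℝ :=
  ∑ A ∈ F, p ^ A.card * (1 - p) ^ (n - A.card)

theorem stmt15 (n s : ℕ) (F : Fin s → Finset (Finset (Fin n)))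
    (hcross : ∀ A : Fin s → Finset (Fin n), (∀ i, A i ∈ F i) →
      (Finset.univ.inf A).Nonempty) :
    (1 / s : ℝ) * ∑ i, biasedMu n (((s : ℝ) - 1) / s) (F i) ≤ ((s : ℝ) - 1) / s := by
  rcases Nat.eq_zero_or_pos s with hs | hs
  · subst hs; simp
  have hs0 : (0:ℝ) < s := by exact_mod_cast hs
  have hsn : (0:ℝ) < (s:ℝ)^n := pow_pos hs0 n
  -- Key counting identity: μ_{(s-1)/s}(F i) * s^n = number of f : Fin n → Fin s
  -- whose complement of fiber at i lies in F i.
  have hT : ∀ i : Fin s, biasedMu n (((s : ℝ) - 1) / s) (F i) * (s:ℝ)^n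
      = ∑ f : Fin n → Fin s,
          (if univ.filter (fun x => f x ≠ i) ∈ F i then (1:ℝ) else 0) := by
    intro i
    have key : ∀ A : Finset (Fin n),
        (∑ f : Fin n → Fin s,
          (if univ.filter (fun x => f x ≠ i) = A then (1:ℝ) else 0))
        = ((s:ℝ)-1) ^ A.card := by
      intro A
      have h1 : ∀ f : Fin n → Fin s,
          (if univ.filter (fun x => f x ≠ i) = A then (1:ℝ) else 0)
          = ∏ x : Fin n, (if (x ∈ A ↔ f x ≠ i) then (1:ℝ) else 0) := by
        intro f
        rw [Fintype.prod_boole]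
        congr 1
        simp only [eq_iff_iff]
        constructor
        · intro h x
          constructor
          · intro hx
            have : x ∈ univ.filter (fun x => f x ≠ i) := h ▸ hx
            simpa using this
          · intro hx
            have : x ∈ univ.filter (fun x => f x ≠ i) := by simpa using hx
            exact h ▸ this
        · intro h
          ext x
          simp only [mem_filter, mem_univ, true_and]
          exact (h x).symm
      calc ∑ f : Fin n → Fin s,
            (if univ.filter (fun x => f x ≠ i) = A then (1:ℝ) else 0)
          = ∑ f : Fin n → Fin s, ∏ x : Fin n,
              (if (x ∈ A ↔ f x ≠ i) then (1:ℝ) else 0) := by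
            exact Finset.sum_congr rfl fun f _ => h1 f
        _ = ∏ x : Fin n, ∑ j : Fin s, (if (x ∈ A ↔ j ≠ i) then (1:ℝ) else 0) := by
            rw [Fintype.prod_sum (fun x j => if (x ∈ A ↔ j ≠ i) then (1:ℝ) else 0)]
        _ = ∏ x : Fin n, (if x ∈ A then ((s:ℝ)-1) else 1) := by
            refine Finset.prod_congr rfl fun x _ => ?_
            by_cases hx : x ∈ A
            · rw [if_pos hx]
              calc ∑ j : Fin s, (if (x ∈ A ↔ j ≠ i) then (1:ℝ) else 0)
                  = ∑ j : Fin s, (if j ≠ i then (1:ℝ) else 0) :=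
                    Finset.sum_congr rfl fun j _ => by simp [hx]
                _ = ((univ.filter (fun j : Fin s => j ≠ i)).card : ℝ) :=
                    Finset.sum_boole _ _
                _ = (s:ℝ) - 1 := by
                    rw [Finset.filter_ne', Finset.card_erase_of_mem (Finset.mem_univ i)]
                    rw [Finset.card_univ, Fintype.card_fin, Nat.cast_sub hs, Nat.cast_one]
            · simp only [hx, false_iff, not_not, if_neg hx]
              simp
        _ = ((s:ℝ)-1) ^ A.card := by
            rw [Finset.prod_ite_mem, Finset.prod_const, Finset.univ_inter]
    have h2 : ∀ f : Fin n → Fin s,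
        (if univ.filter (fun x => f x ≠ i) ∈ F i then (1:ℝ) else 0)
        = ∑ A ∈ F i, (if univ.filter (fun x => f x ≠ i) = A then (1:ℝ) else 0) := by
      intro f
      rw [Finset.sum_ite_eq (F i) (univ.filter (fun x => f x ≠ i)) (fun _ => (1:ℝ))]
    calc biasedMu n (((s : ℝ) - 1) / s) (F i) * (s:ℝ)^n
        = ∑ A ∈ F i, ((s:ℝ)-1) ^ A.card := by
          unfold biasedMu
          rw [Finset.sum_mul]
          refine Finset.sum_congr rfl fun A _ => ?_
          have hk : A.card ≤ n := by
            simpa using Finset.card_le_univ A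
          have h1p : 1 - ((s:ℝ)-1)/s = 1/s := by field_simp; ring
          rw [h1p, div_pow, div_pow, one_pow]
          rw [div_mul_div_comm, ← pow_add, Nat.add_sub_cancel' hk]
          field_simp
      _ = ∑ A ∈ F i, ∑ f : Fin n → Fin s,
            (if univ.filter (fun x => f x ≠ i) = A then (1:ℝ) else 0) := by
          exact Finset.sum_congr rfl fun A _ => (key A).symm
      _ = ∑ f : Fin n → Fin s, ∑ A ∈ F i,
            (if univ.filter (fun x => f x ≠ i) = A then (1:ℝ) else 0) := by
          rw [Finset.sum_comm]
      _ = ∑ f : Fin n → Fin s,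
            (if univ.filter (fun x => f x ≠ i) ∈ F i then (1:ℝ) else 0) := by
          exact Finset.sum_congr rfl fun f _ => (h2 f).symm
  -- For each f, at most s-1 indices i can satisfy the condition.
  have hb : ∀ f : Fin n → Fin s,
      (∑ i : Fin s, (if univ.filter (fun x => f x ≠ i) ∈ F i then (1:ℝ) else 0))
      ≤ (s:ℝ) - 1 := by
    intro f
    set G := univ.filter (fun i : Fin s => univ.filter (fun x => f x ≠ i) ∈ F i) with hG
    have hsum : (∑ i : Fin s, (if univ.filter (fun x => f x ≠ i) ∈ F i then (1:ℝ) else 0))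
        = (G.card : ℝ) := by
      rw [Finset.sum_boole]
    rw [hsum]
    have hGne : G ≠ univ := by
      intro hGu
      have hmem : ∀ i : Fin s, univ.filter (fun x => f x ≠ i) ∈ F i := by
        intro i
        have : i ∈ G := hGu ▸ Finset.mem_univ i
        simpa [hG] using this
      obtain ⟨x, hx⟩ := hcross (fun i => univ.filter (fun y => f y ≠ i)) hmem
      have hle : univ.inf (fun i : Fin s => univ.filter (fun y => f y ≠ i))
          ≤ univ.filter (fun y => f y ≠ f x) := Finset.inf_le (Finset.mem_univ (f x))
      have := hle hx
      simp at this
    have hcard : G.card < s := by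
      have : G ⊂ univ := Finset.ssubset_univ_iff.mpr hGne
      have := Finset.card_lt_card this
      simpa using this
    have : (G.card : ℝ) + 1 ≤ (s:ℝ) := by exact_mod_cast hcard
    linarith
  -- Put it together.
  have hmain : (∑ i, biasedMu n (((s : ℝ) - 1) / s) (F i)) * (s:ℝ)^n
      ≤ ((s:ℝ) - 1) * (s:ℝ)^n := by
    rw [Finset.sum_mul]
    calc ∑ i, biasedMu n (((s : ℝ) - 1) / s) (F i) * (s:ℝ)^n
        = ∑ i, ∑ f : Fin n → Fin s,
            (if univ.filter (fun x => f x ≠ i) ∈ F i then (1:ℝ) else 0) := by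
          exact Finset.sum_congr rfl fun i _ => hT i
      _ = ∑ f : Fin n → Fin s, ∑ i : Fin s,
            (if univ.filter (fun x => f x ≠ i) ∈ F i then (1:ℝ) else 0) := by
          rw [Finset.sum_comm]
      _ ≤ ∑ _f : Fin n → Fin s, ((s:ℝ) - 1) := by
          exact Finset.sum_le_sum fun f _ => hb f
      _ = ((s:ℝ) - 1) * (s:ℝ)^n := by
          rw [Finset.sum_const]
          simp [Fintype.card_fun, mul_comm]
  have hsum_le : (∑ i, biasedMu n (((s : ℝ) - 1) / s) (F i)) ≤ (s:ℝ) - 1 :=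
    le_of_mul_le_mul_right hmain hsn
  calc (1 / s : ℝ) * ∑ i, biasedMu n (((s : ℝ) - 1) / s) (F i)
      ≤ (1 / s : ℝ) * ((s:ℝ) - 1) :=
        mul_le_mul_of_nonneg_left hsum_le (by positivity)
    _ = ((s : ℝ) - 1) / s := by ring
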